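/- Let Y_1,...,Y_K be i.i.d. Exponential(1) random variables and let a_1,...,a_K be reals with |a_k| ≤ M for all k and ∑_k a_k = K·μ with μ > 0. Then P(∑_{k=1}^K a_k Y_k ≤ 0) ≤ exp(−K μ² / (4 M²)). -/

import Mathlib

open MeasureTheory ProbabilityTheory Finset

/-- Key pointwise inequality: `(1+x)⁻¹ ≤ exp (x² - x)` for `x ≥ -1/2`. -/
lemma aux_inv_le_exp {x : ℝ} (h1 : -(1/2) ≤ x) : (1 + x)⁻¹ ≤ Real.exp (x^2 - x) := by
  have hx1 : (0:ℝ) < 1 + x := by linarith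
  set g : ℝ → ℝ := fun y => (1 + y) * Real.exp (y^2 - y) with hg_def
  have hg : ∀ y : ℝ, HasDerivAt g ((y * (2*y+1)) * Real.exp (y^2 - y)) y := by
    intro y
    have h1' : HasDerivAt (fun y : ℝ => y^2 - y) (2*y - 1) y := by
      exact ((hasDerivAt_pow 2 y).sub (hasDerivAt_id' y)).congr_deriv (by norm_num)
    have h2 : HasDerivAt (fun y : ℝ => Real.exp (y^2 - y))
        (Real.exp (y^2 - y) * (2*y - 1)) y := (Real.hasDerivAt_exp _).comp y h1'
    have h3 : HasDerivAt (fun y : ℝ => 1 + y) 1 y := by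
      simpa using (hasDerivAt_id y).const_add 1
    have := h3.mul h2
    exact this.congr_deriv (by ring)
  have hg0 : g 0 = 1 := by simp [hg_def]
  have key : 1 ≤ g x := by
    rcases le_or_gt x 0 with hx0 | hx0
    · have anti : AntitoneOn g (Set.Icc (-(1/2)) 0) := by
        apply antitoneOn_of_deriv_nonpos (convex_Icc _ _)
        · exact fun y _ => ((hg y).differentiableAt).continuousAt.continuousWithinAt
        · exact fun y _ => ((hg y).differentiableAt).differentiableWithinAt
        · intro y hy
          rw [interior_Icc] at hy
          rw [(hg y).deriv]
          have hy1 : -(1/2) < y := hy.1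
          have hy2 : y < 0 := hy.2
          have hE := Real.exp_pos (y^2 - y)
          have h := mul_pos (show (0:ℝ) < 2*y+1 by linarith) hE
          nlinarith
      have := anti ⟨h1, hx0⟩ ⟨by norm_num, le_refl 0⟩ hx0
      rw [hg0] at this; exact this
    · have mono : MonotoneOn g (Set.Ici (0:ℝ)) := by
        apply monotoneOn_of_deriv_nonneg (convex_Ici _)
        · exact fun y _ => ((hg y).differentiableAt).continuousAt.continuousWithinAt
        · exact fun y _ => ((hg y).differentiableAt).differentiableWithinAt
        · intro y hy
          rw [interior_Ici] at hy
          rw [(hg y).deriv]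
          have hy1 : (0:ℝ) < y := hy
          have hE := Real.exp_pos (y^2 - y)
          nlinarith
      have := mono (Set.self_mem_Ici) (Set.mem_Ici.mpr hx0.le) hx0.le
      rw [hg0] at this; exact this
  rw [inv_le_iff_one_le_mul₀ hx1]
  calc (1:ℝ) ≤ g x := key
    _ = Real.exp (x^2 - x) * (1 + x) := by rw [hg_def]; ring

/-- Integral of `exp ((s-1) x)` on `(0, ∞)`. -/
lemma aux_exp_integral_Ioi {s : ℝ} (hs : s < 1) :
    IntegrableOn (fun x => Real.exp ((s-1)*x)) (Set.Ioi (0:ℝ)) ∧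
      ∫ x in Set.Ioi (0:ℝ), Real.exp ((s-1)*x) = (1-s)⁻¹ := by
  have hb : 0 < 1 - s := by linarith
  have hint : IntegrableOn (fun x => Real.exp ((s-1)*x)) (Set.Ioi (0:ℝ)) := by
    have := exp_neg_integrableOn_Ioi 0 hb
    simpa [show ∀ x : ℝ, -(1-s)*x = (s-1)*x by intro x; ring] using this
  refine ⟨hint, ?_⟩
  have hne : s - 1 ≠ 0 := by linarith
  have hderiv : ∀ x ∈ Set.Ici (0:ℝ),
      HasDerivAt (fun x => (s-1)⁻¹ * Real.exp ((s-1)*x)) (Real.exp ((s-1)*x)) x := by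
    intro x _
    have h1 : HasDerivAt (fun x : ℝ => (s-1)*x) (s-1) x := by
      simpa using (hasDerivAt_id x).const_mul (s-1)
    have h2 := ((Real.hasDerivAt_exp _).comp x h1).const_mul ((s-1)⁻¹)
    exact h2.congr_deriv (by rw [mul_comm (Real.exp _), ← mul_assoc, inv_mul_cancel₀ hne, one_mul])
  have htend : Filter.Tendsto (fun x => (s-1)⁻¹ * Real.exp ((s-1)*x)) Filter.atTop (nhds 0) := by
    have h1 : Filter.Tendsto (fun x : ℝ => (1-s)*x) Filter.atTop Filter.atTop :=
      Filter.Tendsto.const_mul_atTop hb Filter.tendsto_id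
    have h2 : Filter.Tendsto (fun x : ℝ => Real.exp ((s-1)*x)) Filter.atTop (nhds 0) := by
      apply Real.tendsto_exp_atBot.comp
      exact Filter.Tendsto.const_mul_atTop_of_neg (by linarith : s - 1 < 0) Filter.tendsto_id
    simpa using h2.const_mul ((s-1)⁻¹)
  have := integral_Ioi_of_hasDerivAt_of_tendsto' hderiv hint htend
  rw [this]
  simp only [mul_zero, Real.exp_zero, mul_one]
  rw [zero_sub, ← inv_neg]
  norm_num

/-- MGF of the exponential(1) measure. -/
lemma aux_exp_mgf_expMeasure {s : ℝ} (hs : s < 1) :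
    Integrable (fun x => Real.exp (s*x)) (expMeasure 1) ∧
      ∫ x, Real.exp (s*x) ∂(expMeasure 1) = (1-s)⁻¹ := by
  set d : ℝ → NNReal := fun x => Real.toNNReal (if 0 ≤ x then Real.exp (-x) else 0) with hd_def
  have hd : Measurable d :=
    (Measurable.ite measurableSet_Ici (measurable_id.neg.exp) measurable_const).real_toNNReal
  have hmeq : expMeasure 1 = volume.withDensity (fun x => (d x : ENNReal)) := by
    rw [expMeasure, gammaMeasure]
    congr 1
    funext x
    rw [show gammaPDF 1 1 x = exponentialPDF 1 x from rfl, exponentialPDF_eq]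
    simp only [hd_def, one_mul, ENNReal.ofReal]
  have hptw : ∀ x : ℝ, d x • Real.exp (s*x)
      = Set.indicator (Set.Ici (0:ℝ)) (fun x => Real.exp ((s-1)*x)) x := by
    intro x
    by_cases hx : 0 ≤ x
    · simp only [hd_def, NNReal.smul_def, if_pos hx, Real.coe_toNNReal _ (Real.exp_nonneg _),
        Set.indicator_of_mem (Set.mem_Ici.mpr hx), ← Real.exp_add]
      rw [smul_eq_mul, ← Real.exp_add]
      congr 1
      ring
    · simp only [hd_def, NNReal.smul_def, if_neg hx,
        Set.indicator_of_notMem (show x ∉ Set.Ici (0:ℝ) by simpa using hx)]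
      simp
  constructor
  · rw [hmeq, integrable_withDensity_iff_integrable_smul hd]
    have : (fun x => d x • Real.exp (s*x))
        = Set.indicator (Set.Ici (0:ℝ)) (fun x => Real.exp ((s-1)*x)) := funext hptw
    rw [this, integrable_indicator_iff measurableSet_Ici,
      integrableOn_Ici_iff_integrableOn_Ioi]
    exact (aux_exp_integral_Ioi hs).1
  · rw [hmeq, integral_withDensity_eq_integral_smul hd]
    calc ∫ x, d x • Real.exp (s*x)
        = ∫ x, Set.indicator (Set.Ici (0:ℝ)) (fun x => Real.exp ((s-1)*x)) x :=
          by exact integral_congr_ae (Filter.Eventually.of_forall hptw)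
      _ = ∫ x in Set.Ici (0:ℝ), Real.exp ((s-1)*x) := integral_indicator measurableSet_Ici
      _ = ∫ x in Set.Ioi (0:ℝ), Real.exp ((s-1)*x) := integral_Ici_eq_integral_Ioi
      _ = (1-s)⁻¹ := (aux_exp_integral_Ioi hs).2

/-- MGF of an exponential(1) random variable. -/
lemma aux_exp_mgf_Y {Ω : Type*} [MeasureSpace Ω] (P : Measure Ω) [IsProbabilityMeasure P]
    {Y0 : Ω → ℝ} (hY : Measurable Y0) (hd : P.map Y0 = expMeasure 1)
    {s : ℝ} (hs : s < 1) :
    Integrable (fun ω => Real.exp (s * Y0 ω)) P ∧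
      ∫ ω, Real.exp (s * Y0 ω) ∂P = (1-s)⁻¹ := by
  have hg : AEStronglyMeasurable (fun x => Real.exp (s*x)) (P.map Y0) :=
    (Real.continuous_exp.comp (continuous_const.mul continuous_id)).aestronglyMeasurable
  constructor
  · have hI := (aux_exp_mgf_expMeasure hs).1
    rw [← hd] at hI
    exact (integrable_map_measure hg hY.aemeasurable).mp hI
  · have : ∫ ω, Real.exp (s * Y0 ω) ∂P = ∫ x, Real.exp (s*x) ∂(P.map Y0) :=
      (integral_map hY.aemeasurable hg).symm
    rw [this, hd]
    exact (aux_exp_mgf_expMeasure hs).2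

/-- Chernoff bound: if `Y 1, ..., Y K` are i.i.d. `Exponential(1)` random
variables and the coefficients `a k` satisfy `|a k| ≤ M` and `∑ k, a k = K * μ`
with `μ > 0`, then `P(∑ k, a k * Y k ≤ 0) ≤ exp (-K * μ^2 / (4 * M^2))`. -/
theorem exp_weighted_sum_chernoff
    {Ω : Type*} [MeasureSpace Ω] (P : Measure Ω) [IsProbabilityMeasure P]
    (K : ℕ) (hK : 1 ≤ K) (Y : Fin K → Ω → ℝ)
    (hmeas : ∀ k, Measurable (Y k))
    (hindep : iIndepFun Y P)
    (hdist : ∀ k, P.map (Y k) = ProbabilityTheory.expMeasure 1)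
    (a : Fin K → ℝ) (M μ : ℝ) (hM : 0 < M) (hμ : 0 < μ)
    (habs : ∀ k, |a k| ≤ M) (hsum : ∑ k, a k = K * μ) :
    P {ω | ∑ k, a k * Y k ω ≤ 0}
      ≤ ENNReal.ofReal (Real.exp (-(K * μ ^ 2) / (4 * M ^ 2))) := by
  classical
  have hK0 : (0:ℝ) < K := by exact_mod_cast Nat.lt_of_lt_of_le Nat.zero_lt_one hK
  set c : ℝ := μ / (2 * M ^ 2) with hc_def
  have hc : 0 < c := by positivity
  have hμM : μ ≤ M := by
    have h1 : (K:ℝ) * μ ≤ (K:ℝ) * M := by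
      rw [← hsum]
      calc ∑ k, a k ≤ ∑ _k : Fin K, M :=
            Finset.sum_le_sum (fun k _ => (abs_le.mp (habs k)).2)
        _ = (K:ℝ) * M := by simp [Finset.sum_const, Finset.card_univ]
    exact le_of_mul_le_mul_left h1 hK0
  have hcM : c * M = μ / (2 * M) := by
    rw [hc_def]; field_simp
  have hca : ∀ k, |c * a k| ≤ 1/2 := by
    intro k
    rw [abs_mul, abs_of_pos hc]
    calc c * |a k| ≤ c * M := by
          exact mul_le_mul_of_nonneg_left (habs k) hc.le
      _ = μ / (2 * M) := hcM
      _ ≤ 1/2 := by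
          rw [div_le_iff₀ (by positivity)]
          linarith
  set t : ℝ := -c with ht_def
  set X : Fin K → Ω → ℝ := fun k ω => a k * Y k ω with hX_def
  have hXmeas : ∀ k, Measurable (X k) := fun k => (hmeas k).const_mul (a k)
  have hXindep : iIndepFun X P :=
    hindep.comp (fun k x => a k * x) (fun k => measurable_id.const_mul (a k))
  have hta : ∀ k, t * a k < 1 := by
    intro k
    have : |t * a k| ≤ 1/2 := by
      rw [ht_def, neg_mul, abs_neg]; exact hca k
    have h2 := (abs_le.mp this).2
    exact lt_of_le_of_lt h2 (by norm_num)
  have h_int : ∀ k, Integrable (fun ω => Real.exp (t * X k ω)) P := by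
    intro k
    have := (aux_exp_mgf_Y P (hmeas k) (hdist k) (hta k)).1
    simpa [hX_def, mul_assoc] using this
  have h_mgf : ∀ k, mgf (X k) P t = (1 - t * a k)⁻¹ := by
    intro k
    have h1 : mgf (X k) P t = ∫ ω, Real.exp ((t * a k) * Y k ω) ∂P := by
      simp only [mgf, hX_def, mul_assoc]
    rw [h1, (aux_exp_mgf_Y P (hmeas k) (hdist k) (hta k)).2]
  have h_sum_int : Integrable (fun ω => Real.exp (t * (∑ k, X k) ω)) P :=
    hXindep.integrable_exp_mul_sum hXmeas (fun i _ => h_int i)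
  have hcher := measure_le_le_exp_mul_mgf (μ := P) (X := ∑ k, X k) 0
    (by rw [ht_def]; linarith) h_sum_int
  have hset : {ω | (∑ k, X k) ω ≤ 0} = {ω | ∑ k, a k * Y k ω ≤ 0} := by
    ext ω
    simp [hX_def, Finset.sum_apply]
  rw [hset] at hcher
  have hprod : mgf (∑ k, X k) P t = ∏ k, mgf (X k) P t :=
    hXindep.mgf_sum hXmeas Finset.univ
  have h_each_pos : ∀ k : Fin K, (0:ℝ) < 1 + c * a k := by
    intro k
    have := (abs_le.mp (hca k)).1
    linarith
  have h_each : ∀ k : Fin K, mgf (X k) P t ≤ Real.exp ((c * a k)^2 - c * a k) := by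
    intro k
    rw [h_mgf k]
    have h1 : 1 - t * a k = 1 + c * a k := by rw [ht_def]; ring
    rw [h1]
    exact aux_inv_le_exp (abs_le.mp (hca k)).1
  have hbound : (P {ω | ∑ k, a k * Y k ω ≤ 0}).toReal
      ≤ Real.exp (-(K * μ ^ 2) / (4 * M ^ 2)) := by
    calc (P {ω | ∑ k, a k * Y k ω ≤ 0}).toReal
        ≤ Real.exp (-t * 0) * mgf (∑ k, X k) P t := hcher
      _ = mgf (∑ k, X k) P t := by simp
      _ = ∏ k, mgf (X k) P t := hprod
      _ ≤ ∏ k, Real.exp ((c * a k)^2 - c * a k) := by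
          apply Finset.prod_le_prod
          · exact fun k _ => mgf_nonneg
          · exact fun k _ => h_each k
      _ = Real.exp (∑ k, ((c * a k)^2 - c * a k)) := by rw [← Real.exp_sum]
      _ ≤ Real.exp (-(K * μ ^ 2) / (4 * M ^ 2)) := by
          apply Real.exp_le_exp.mpr
          have hs1 : ∑ k, ((c * a k)^2 - c * a k)
              = c^2 * (∑ k, (a k)^2) - c * ((K:ℝ) * μ) := by
            rw [← hsum, Finset.mul_sum, Finset.mul_sum, ← Finset.sum_sub_distrib]
            congr 1; funext k; ring
          have hs2 : ∑ k, (a k)^2 ≤ (K:ℝ) * M^2 := by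
            calc ∑ k, (a k)^2 ≤ ∑ _k : Fin K, M^2 := by
                  apply Finset.sum_le_sum
                  intro k _
                  have := habs k
                  nlinarith [abs_nonneg (a k), sq_abs (a k)]
              _ = (K:ℝ) * M^2 := by simp [Finset.sum_const, Finset.card_univ]
          have hfinal : c^2 * ((K:ℝ) * M^2) - c * ((K:ℝ) * μ)
              = -(K * μ ^ 2) / (4 * M ^ 2) := by
            rw [hc_def]; field_simp; ring
          rw [hs1]
          have : c^2 * (∑ k, (a k)^2) ≤ c^2 * ((K:ℝ) * M^2) :=
            mul_le_mul_of_nonneg_left hs2 (by positivity)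
          linarith [hfinal ▸ (by linarith : c^2 * (∑ k, (a k)^2) - c * ((K:ℝ) * μ)
            ≤ c^2 * ((K:ℝ) * M^2) - c * ((K:ℝ) * μ))]
  calc P {ω | ∑ k, a k * Y k ω ≤ 0}
      = ENNReal.ofReal (P {ω | ∑ k, a k * Y k ω ≤ 0}).toReal :=
        (ENNReal.ofReal_toReal (measure_ne_top P _)).symm
    _ ≤ ENNReal.ofReal (Real.exp (-(K * μ ^ 2) / (4 * M ^ 2))) :=
        ENNReal.ofReal_le_ofReal hbound
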